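/- Let 𝒳, 𝒴, 𝒵 be nonempty finite sets, let p_X, p_Y, p_Z be strictly positive probability mass functions on them, and let ψ_Y : 𝒴 × 𝒳 → ℝ, ψ_Z : 𝒵 × 𝒳 → ℝ satisfy ∑_y p_Y(y)ψ_Y(y,x) = 0 and ∑_z p_Z(z)ψ_Z(z,x) = 0 for every x. For ε small enough that all factors below are positive, define the joint pmf q_ε(x,y,z) = p_X(x)·p_Y(y)(1 + ε·ψ_Y(y,x))·p_Z(z)(1 + ε·ψ_Z(z,x)), and define, via the marginals of q_ε, the finite sums I_ε(X;Y) = ∑_{x,y} q_ε(x,y)·log( q_ε(x,y) / (p_X(x)·q_ε(y)) ), I_ε(X;Z) analogously, and I_ε(X;Y,Z) = ∑_{x,y,z} q_ε(x,y,z)·log( q_ε(x,y,z) / (p_X(x)·q_ε(y,z)) ). Then lim_{ε → 0} ( I_ε(X;Y,Z) − I_ε(X;Y) − I_ε(X;Z) ) / ε² = 0. -/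

import Mathlib

open Finset

variable {X Y Z : Type*} [Fintype X] [Fintype Y] [Fintype Z]

/-- The joint pmf `q_ε(x,y,z) = p_X(x)·p_Y(y)(1 + ε·ψ_Y(y,x))·p_Z(z)(1 + ε·ψ_Z(z,x))` of two
very noisy channels `X → Y` and `X → Z` that are conditionally independent given `X`. -/
def vncJoint (pX : X → ℝ) (pY : Y → ℝ) (pZ : Z → ℝ) (ψY : Y → X → ℝ) (ψZ : Z → X → ℝ)
    (ε : ℝ) (x : X) (y : Y) (z : Z) : ℝ :=
  pX x * (pY y * (1 + ε * ψY y x)) * (pZ z * (1 + ε * ψZ z x))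

/-- `I_ε(X;Y)`, computed from the marginals of `q_ε`. -/
noncomputable def vncIXY (pX : X → ℝ) (pY : Y → ℝ) (pZ : Z → ℝ) (ψY : Y → X → ℝ)
    (ψZ : Z → X → ℝ) (ε : ℝ) : ℝ :=
  ∑ x, ∑ y, (∑ z, vncJoint pX pY pZ ψY ψZ ε x y z) *
    Real.log ((∑ z, vncJoint pX pY pZ ψY ψZ ε x y z) /
      (pX x * ∑ x', ∑ z, vncJoint pX pY pZ ψY ψZ ε x' y z))

/-- `I_ε(X;Z)`, computed from the marginals of `q_ε`. -/
noncomputable def vncIXZ (pX : X → ℝ) (pY : Y → ℝ) (pZ : Z → ℝ) (ψY : Y → X → ℝ)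
    (ψZ : Z → X → ℝ) (ε : ℝ) : ℝ :=
  ∑ x, ∑ z, (∑ y, vncJoint pX pY pZ ψY ψZ ε x y z) *
    Real.log ((∑ y, vncJoint pX pY pZ ψY ψZ ε x y z) /
      (pX x * ∑ x', ∑ y, vncJoint pX pY pZ ψY ψZ ε x' y z))

/-- `I_ε(X;Y,Z)`, computed from the marginals of `q_ε`. -/
noncomputable def vncIXYZ (pX : X → ℝ) (pY : Y → ℝ) (pZ : Z → ℝ) (ψY : Y → X → ℝ)
    (ψZ : Z → X → ℝ) (ε : ℝ) : ℝ :=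
  ∑ x, ∑ y, ∑ z, vncJoint pX pY pZ ψY ψZ ε x y z *
    Real.log (vncJoint pX pY pZ ψY ψZ ε x y z /
      (pX x * ∑ x', vncJoint pX pY pZ ψY ψZ ε x' y z))



open Filter Real

/-- remainder function: `(1+t)log(1+t) = t + t^2 * rfun t`. -/
noncomputable def rfunVNC (t : ℝ) : ℝ :=
  if t = 0 then 1/2 else ((1+t) * Real.log (1+t) - t)/t^2

lemma rfunVNC_spec (t : ℝ) : (1+t) * Real.log (1+t) = t + t^2 * rfunVNC t := by
  unfold rfunVNC
  split_ifs with h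
  · simp [h]
  · field_simp
    ring

lemma tendsto_log_one_add_div : Filter.Tendsto (fun t : ℝ => Real.log (1+t) / t)
    (nhdsWithin 0 {(0:ℝ)}ᶜ) (nhds 1) := by
  have h : HasDerivAt (fun t : ℝ => Real.log (1+t)) 1 0 := by
    have := ((hasDerivAt_id (0:ℝ)).const_add 1).log (by norm_num)
    simpa using this
  have := hasDerivAt_iff_tendsto_slope.mp h
  refine this.congr' ?_ |>.mono_right ?_
  · filter_upwards [self_mem_nhdsWithin] with t ht
    simp [slope_def_field]
  · exact le_refl _

lemma tendsto_log_sub_div_sq : Filter.Tendsto (fun t : ℝ => (Real.log (1+t) - t) / t^2)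
    (nhdsWithin 0 {(0:ℝ)}ᶜ) (nhds (-(1/2))) := by
  have key : ∀ t : ℝ, |t| < 1 → |Real.log (1+t) - t + t^2/2| ≤ |t|^3/(1-|t|) := by
    intro t ht
    have h := Real.abs_log_sub_add_sum_range_le (x := -t) (by simpa using ht) 2
    have e1 : (∑ i ∈ Finset.range 2, (-t) ^ (i + 1) / (i + 1)) = -t + t^2/2 := by
      simp [Finset.sum_range_succ]
      ring
    rw [e1] at h
    simp only [sub_neg_eq_add, abs_neg] at h
    calc |Real.log (1+t) - t + t^2/2| = |(-t + t^2/2) + Real.log (1 + t)| := by ring_nf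
      _ ≤ |t|^3/(1-|t|) := h
  have h0 : Filter.Tendsto (fun t : ℝ => (Real.log (1+t) - t) / t^2 + 1/2)
      (nhdsWithin 0 {(0:ℝ)}ᶜ) (nhds 0) := by
    apply squeeze_zero_norm' (a := fun t : ℝ => 2*|t|)
    · have hmem : ∀ᶠ t : ℝ in nhdsWithin 0 {(0:ℝ)}ᶜ, |t| < 1/2 ∧ t ≠ 0 := by
        filter_upwards [self_mem_nhdsWithin,
          eventually_nhdsWithin_of_eventually_nhds
            (eventually_abs_sub_lt (0:ℝ) (by norm_num : (0:ℝ) < 1/2))] with t h1 h2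
        exact ⟨by simpa using h2, h1⟩
      filter_upwards [hmem] with t ⟨ht2, ht0⟩
      have ht2' : t^2 ≠ 0 := pow_ne_zero _ ht0
      have habs : (0:ℝ) < t^2 := by positivity
      have e : (Real.log (1+t) - t) / t^2 + 1/2 = (Real.log (1+t) - t + t^2/2) / t^2 := by
        rw [eq_div_iff ht2', add_mul, div_mul_cancel₀ _ ht2']
        ring
      rw [Real.norm_eq_abs, e, abs_div, abs_of_pos habs]
      have hb := key t (by linarith [abs_nonneg t])
      have h1t : (1:ℝ)/2 ≤ 1 - |t| := by linarith
      have h1t' : (0:ℝ) < 1 - |t| := by linarith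
      rw [div_le_iff₀ habs]
      calc |Real.log (1+t) - t + t^2/2| ≤ |t|^3/(1-|t|) := hb
        _ = |t| * t^2 / (1-|t|) := by rw [← sq_abs]; ring
        _ ≤ |t| * t^2 / (1/2) := by
            apply div_le_div_of_nonneg_left (by positivity) (by norm_num) h1t
        _ = 2*|t| * t^2 := by ring
    · have : Filter.Tendsto (fun t : ℝ => 2*|t|) (nhds 0) (nhds 0) := by
        simpa using ((continuous_abs.tendsto (0:ℝ)).congr (fun _ => rfl)).const_mul 2
      exact this.mono_left nhdsWithin_le_nhds
  have := h0.sub (tendsto_const_nhds (x := (1/2 : ℝ)))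
  simpa using this


lemma rfunVNC_tendsto : Filter.Tendsto rfunVNC (nhds 0) (nhds (1/2)) := by
  rw [← nhdsNE_sup_pure (0:ℝ)]
  rw [Filter.tendsto_sup]
  constructor
  · have h := tendsto_log_sub_div_sq.add tendsto_log_one_add_div
    have : -(1/2 : ℝ) + 1 = 1/2 := by norm_num
    rw [this] at h
    refine h.congr' ?_
    filter_upwards [self_mem_nhdsWithin] with t ht
    have ht0 : t ≠ 0 := by simpa using ht
    simp only [rfunVNC, if_neg ht0]
    field_simp
    ring
  · have : rfunVNC 0 = 1/2 := by simp [rfunVNC]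
    simpa [this] using tendsto_pure_nhds rfunVNC 0


lemma sum_mul_one_add_eq {α : Type*} [Fintype α] (p f : α → ℝ) (hp : ∑ a, p a = 1) (ε : ℝ) :
    ∑ a, p a * (1 + ε * f a) = 1 + ε * ∑ a, p a * f a := by
  have h : ∀ a : α, p a * (1 + ε * f a) = p a + ε * (p a * f a) := fun a => by ring
  rw [Finset.sum_congr rfl fun a _ => h a, Finset.sum_add_distrib, hp, ← Finset.mul_sum]

lemma sum_mul_prod_eq {α : Type*} [Fintype α] (p f g : α → ℝ) (hp : ∑ a, p a = 1) (ε : ℝ) :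
    ∑ a, p a * ((1 + ε * f a) * (1 + ε * g a)) =
      1 + (ε * ∑ a, p a * f a + ε * ∑ a, p a * g a + ε^2 * ∑ a, p a * (f a * g a)) := by
  have h : ∀ a : α, p a * ((1 + ε * f a) * (1 + ε * g a)) =
      p a + (ε * (p a * f a) + ε * (p a * g a) + ε^2 * (p a * (f a * g a))) := fun a => by ring
  rw [Finset.sum_congr rfl fun a _ => h a, Finset.sum_add_distrib, hp]
  rw [Finset.sum_add_distrib, Finset.sum_add_distrib, ← Finset.mul_sum, ← Finset.mul_sum,
    ← Finset.mul_sum]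

/-- STATEMENT 17: for two very noisy channels `X → Y` and `X → Z` (conditionally independent
given `X`) with strictly positive pmfs and centered perturbations `ψ_Y`, `ψ_Z`, the mutual
information obeys `lim_{ε → 0} ( I_ε(X;Y,Z) − I_ε(X;Y) − I_ε(X;Z) ) / ε² = 0`. -/
theorem very_noisy_channels_mutual_info (pX : X → ℝ) (pY : Y → ℝ) (pZ : Z → ℝ)
    (hpX : ∀ x, 0 < pX x) (hpY : ∀ y, 0 < pY y) (hpZ : ∀ z, 0 < pZ z)
    (hpX1 : ∑ x, pX x = 1) (hpY1 : ∑ y, pY y = 1) (hpZ1 : ∑ z, pZ z = 1)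
    (ψY : Y → X → ℝ) (ψZ : Z → X → ℝ)
    (hψY : ∀ x, ∑ y, pY y * ψY y x = 0) (hψZ : ∀ x, ∑ z, pZ z * ψZ z x = 0) :
    Filter.Tendsto
      (fun ε : ℝ =>
        (vncIXYZ pX pY pZ ψY ψZ ε - vncIXY pX pY pZ ψY ψZ ε - vncIXZ pX pY pZ ψY ψZ ε) / ε ^ 2)
      (nhdsWithin 0 {(0 : ℝ)}ᶜ) (nhds 0) := by
  classical
  set A : Y → ℝ := fun y => ∑ x, pX x * ψY y x with hA
  set B : Z → ℝ := fun z => ∑ x, pX x * ψZ z x with hB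
  set C : Y → Z → ℝ := fun y z => ∑ x, pX x * (ψY y x * ψZ z x) with hC
  -- centered-sum facts
  have hA0 : ∑ y, pY y * A y = 0 := by
    have h1 : ∀ y : Y, pY y * A y = ∑ x, pX x * (pY y * ψY y x) := by
      intro y
      rw [hA, Finset.mul_sum]
      exact Finset.sum_congr rfl fun x _ => by ring
    rw [Finset.sum_congr rfl fun y _ => h1 y, Finset.sum_comm]
    refine Finset.sum_eq_zero fun x _ => ?_
    rw [← Finset.mul_sum, hψY x, mul_zero]
  have hB0 : ∑ z, pZ z * B z = 0 := by
    have h1 : ∀ z : Z, pZ z * B z = ∑ x, pX x * (pZ z * ψZ z x) := by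
      intro z
      rw [hB, Finset.mul_sum]
      exact Finset.sum_congr rfl fun x _ => by ring
    rw [Finset.sum_congr rfl fun z _ => h1 z, Finset.sum_comm]
    refine Finset.sum_eq_zero fun x _ => ?_
    rw [← Finset.mul_sum, hψZ x, mul_zero]
  have hC0 : ∑ y, ∑ z, pY y * (pZ z * C y z) = 0 := by
    have h2 : ∀ y, ∑ z, pY y * (pZ z * C y z) = ∑ x, pX x * ((pY y * ψY y x) * ∑ z, pZ z * ψZ z x) := by
      intro y
      have h1 : ∀ z : Z, pY y * (pZ z * C y z) = ∑ x, pX x * ((pY y * ψY y x) * (pZ z * ψZ z x)) := by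
        intro z
        rw [hC]
        rw [Finset.mul_sum, Finset.mul_sum]
        exact Finset.sum_congr rfl fun x _ => by ring
      rw [Finset.sum_congr rfl fun z _ => h1 z, Finset.sum_comm]
      refine Finset.sum_congr rfl fun x _ => ?_
      rw [Finset.mul_sum, Finset.mul_sum]
    rw [Finset.sum_congr rfl fun y _ => h2 y]
    refine Finset.sum_eq_zero fun y _ => Finset.sum_eq_zero fun x _ => ?_
    rw [hψZ x, mul_zero, mul_zero]
  have hAB0 : ∑ y, ∑ z, pY y * (pZ z * A y) = 0 := by
    have h1 : ∀ y, ∑ z, pY y * (pZ z * A y) = pY y * A y := by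
      intro y
      have : ∀ z : Z, pY y * (pZ z * A y) = (pY y * A y) * pZ z := fun z => by ring
      rw [Finset.sum_congr rfl fun z _ => this z, ← Finset.mul_sum, hpZ1, mul_one]
    rw [Finset.sum_congr rfl fun y _ => h1 y, hA0]
  have hBA0 : ∑ y, ∑ z, pY y * (pZ z * B z) = 0 := by
    have h1 : ∀ y, ∑ z, pY y * (pZ z * B z) = pY y * ∑ z, pZ z * B z := by
      intro y
      rw [Finset.mul_sum]
    rw [Finset.sum_congr rfl fun y _ => h1 y]
    refine Finset.sum_eq_zero fun y _ => by rw [hB0, mul_zero]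
  set s : ℝ → Y → Z → ℝ := fun ε y z => ε * A y + ε * B z + ε^2 * C y z with hs
  set G : ℝ → ℝ := fun ε =>
    (∑ y, pY y * (A y^2 * rfunVNC (ε * A y)))
    + (∑ z, pZ z * (B z^2 * rfunVNC (ε * B z)))
    - ∑ y, ∑ z, pY y * (pZ z * ((A y + B z + ε * C y z)^2 * rfunVNC (s ε y z))) with hG
  set SY : ℝ → ℝ := fun ε => ∑ y, pY y * ((1 + ε * A y) * Real.log (1 + ε * A y)) with hSY
  set SZ : ℝ → ℝ := fun ε => ∑ z, pZ z * ((1 + ε * B z) * Real.log (1 + ε * B z)) with hSZ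
  set SYZ : ℝ → ℝ := fun ε =>
    ∑ y, ∑ z, pY y * (pZ z * ((1 + s ε y z) * Real.log (1 + s ε y z))) with hSYZ
  -- Step II: algebraic factorization
  have claim2 : ∀ ε : ℝ, SY ε + SZ ε - SYZ ε = ε^2 * G ε := by
    intro ε
    have eSY : SY ε = ε * (∑ y, pY y * A y) + ε^2 * (∑ y, pY y * (A y^2 * rfunVNC (ε * A y))) := by
      rw [hSY]
      calc ∑ y, pY y * ((1 + ε * A y) * Real.log (1 + ε * A y))
          = ∑ y, (ε * (pY y * A y) + ε^2 * (pY y * (A y^2 * rfunVNC (ε * A y)))) := by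
            refine Finset.sum_congr rfl fun y _ => ?_
            rw [rfunVNC_spec (ε * A y)]
            ring
        _ = _ := by rw [Finset.sum_add_distrib, ← Finset.mul_sum, ← Finset.mul_sum]
    have eSZ : SZ ε = ε * (∑ z, pZ z * B z) + ε^2 * (∑ z, pZ z * (B z^2 * rfunVNC (ε * B z))) := by
      rw [hSZ]
      calc ∑ z, pZ z * ((1 + ε * B z) * Real.log (1 + ε * B z))
          = ∑ z, (ε * (pZ z * B z) + ε^2 * (pZ z * (B z^2 * rfunVNC (ε * B z)))) := by
            refine Finset.sum_congr rfl fun z _ => ?_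
            rw [rfunVNC_spec (ε * B z)]
            ring
        _ = _ := by rw [Finset.sum_add_distrib, ← Finset.mul_sum, ← Finset.mul_sum]
    have eSYZ : SYZ ε = ε * (∑ y, ∑ z, pY y * (pZ z * A y)) + ε * (∑ y, ∑ z, pY y * (pZ z * B z))
        + ε^2 * (∑ y, ∑ z, pY y * (pZ z * C y z))
        + ε^2 * (∑ y, ∑ z, pY y * (pZ z * ((A y + B z + ε * C y z)^2 * rfunVNC (s ε y z)))) := by
      rw [hSYZ]
      calc ∑ y, ∑ z, pY y * (pZ z * ((1 + s ε y z) * Real.log (1 + s ε y z)))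
          = ∑ y, ∑ z, (ε * (pY y * (pZ z * A y)) + ε * (pY y * (pZ z * B z))
              + ε^2 * (pY y * (pZ z * C y z))
              + ε^2 * (pY y * (pZ z * ((A y + B z + ε * C y z)^2 * rfunVNC (s ε y z))))) := by
            refine Finset.sum_congr rfl fun y _ => Finset.sum_congr rfl fun z _ => ?_
            rw [rfunVNC_spec (s ε y z)]
            simp only [hs]
            ring
        _ = _ := by
            simp only [Finset.sum_add_distrib, ← Finset.mul_sum]
    rw [eSY, eSZ, eSYZ, hA0, hB0, hAB0, hBA0, hC0, hG]
    ring
  -- Step I: limit of G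
  have hGlim : Filter.Tendsto G (nhds 0) (nhds 0) := by
    have hid : Filter.Tendsto (fun ε : ℝ => ε) (nhds 0) (nhds 0) := tendsto_id
    have hy : ∀ y : Y, Filter.Tendsto (fun ε : ℝ => pY y * (A y^2 * rfunVNC (ε * A y)))
        (nhds 0) (nhds (pY y * (A y^2 * (1/2)))) := by
      intro y
      refine tendsto_const_nhds.mul (tendsto_const_nhds.mul ?_)
      refine rfunVNC_tendsto.comp ?_
      simpa using hid.mul_const (A y)
    have hz : ∀ z : Z, Filter.Tendsto (fun ε : ℝ => pZ z * (B z^2 * rfunVNC (ε * B z)))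
        (nhds 0) (nhds (pZ z * (B z^2 * (1/2)))) := by
      intro z
      refine tendsto_const_nhds.mul (tendsto_const_nhds.mul ?_)
      refine rfunVNC_tendsto.comp ?_
      simpa using hid.mul_const (B z)
    have hyz : ∀ (y : Y) (z : Z), Filter.Tendsto
        (fun ε : ℝ => pY y * (pZ z * ((A y + B z + ε * C y z)^2 * rfunVNC (s ε y z))))
        (nhds 0) (nhds (pY y * (pZ z * ((A y + B z)^2 * (1/2))))) := by
      intro y z
      refine tendsto_const_nhds.mul (tendsto_const_nhds.mul (Filter.Tendsto.mul ?_ ?_))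
      · refine Filter.Tendsto.pow ?_ 2
        simpa using tendsto_const_nhds.add (hid.mul_const (C y z))
      · refine rfunVNC_tendsto.comp ?_
        simp only [hs]
        have h1 := (hid.mul_const (A y)).add (hid.mul_const (B z))
        have h2 := ((hid.pow 2).mul_const (C y z))
        simpa using h1.add h2
    have h1 := tendsto_finset_sum Finset.univ fun (y : Y) _ => hy y
    have h2 := tendsto_finset_sum Finset.univ fun (z : Z) _ => hz z
    have h3 := tendsto_finset_sum Finset.univ fun (y : Y) _ =>
      tendsto_finset_sum Finset.univ fun (z : Z) _ => hyz y z
    have hcomb := (h1.add h2).sub h3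
    have t1 : ∀ y : Y, ∑ z, (pY y * (A y^2*(1/2))) * pZ z = pY y * (A y^2*(1/2)) := by
      intro y
      rw [← Finset.mul_sum, hpZ1, mul_one]
    have t2 : ∑ y, ∑ z, (pY y * A y) * (pZ z * B z)
        = (∑ y, pY y * A y) * (∑ z, pZ z * B z) := (Finset.sum_mul_sum _ _ _ _).symm
    have t3 : ∑ y, ∑ z, pY y * (pZ z * (B z^2*(1/2))) = ∑ z, pZ z * (B z^2*(1/2)) := by
      have hin : ∀ y : Y, ∑ z, pY y * (pZ z * (B z^2*(1/2)))
          = pY y * ∑ z, pZ z * (B z^2*(1/2)) := fun y => by rw [Finset.mul_sum]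
      rw [Finset.sum_congr rfl fun y _ => hin y, ← Finset.sum_mul, hpY1, one_mul]
    have e : ∑ y, ∑ z, pY y * (pZ z * ((A y + B z)^2 * (1/2)))
        = (∑ y, pY y * (A y^2*(1/2))) + ((∑ y, pY y * A y) * (∑ z, pZ z * B z)
          + (∑ z, pZ z * (B z^2*(1/2)))) := by
      calc ∑ y, ∑ z, pY y * (pZ z * ((A y + B z)^2 * (1/2)))
          = ∑ y, ∑ z, ((pY y * (A y^2*(1/2))) * pZ z + ((pY y * A y) * (pZ z * B z)
              + pY y * (pZ z * (B z^2*(1/2))))) := by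
            refine Finset.sum_congr rfl fun y _ => Finset.sum_congr rfl fun z _ => ?_
            ring
        _ = _ := by
            simp only [Finset.sum_add_distrib]
            rw [t2, t3, Finset.sum_congr rfl fun y _ => t1 y]
    have hV : ((∑ y, pY y * (A y^2*(1/2))) + (∑ z, pZ z * (B z^2*(1/2))))
        - ∑ y, ∑ z, pY y * (pZ z * ((A y + B z)^2 * (1/2))) = 0 := by
      rw [e, hA0]
      ring
    rw [hG]
    rw [hV] at hcomb
    exact hcomb
  -- Step III: eventual identity
  have ident : ∀ ε : ℝ, (∀ y x, 0 < 1 + ε * ψY y x) → (∀ z x, 0 < 1 + ε * ψZ z x) →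
      (∀ y, 0 < 1 + ε * A y) → (∀ z, 0 < 1 + ε * B z) → (∀ y z, 0 < 1 + s ε y z) →
      vncIXYZ pX pY pZ ψY ψZ ε - vncIXY pX pY pZ ψY ψZ ε - vncIXZ pX pY pZ ψY ψZ ε
        = SY ε + SZ ε - SYZ ε := by
    intro ε p1 p2 p3 p4 p5
    have mZ : ∀ (x : X) (y : Y), ∑ z, vncJoint pX pY pZ ψY ψZ ε x y z
        = pX x * (pY y * (1 + ε * ψY y x)) := by
      intro x y
      simp only [vncJoint]
      rw [← Finset.mul_sum, sum_mul_one_add_eq pZ (fun z => ψZ z x) hpZ1 ε,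
        hψZ x, mul_zero, add_zero, mul_one]
    have mY : ∀ (x : X) (z : Z), ∑ y, vncJoint pX pY pZ ψY ψZ ε x y z
        = pX x * (pZ z * (1 + ε * ψZ z x)) := by
      intro x z
      have h : ∀ y : Y, vncJoint pX pY pZ ψY ψZ ε x y z
          = (pX x * (pZ z * (1 + ε * ψZ z x))) * (pY y * (1 + ε * ψY y x)) := by
        intro y; simp only [vncJoint]; ring
      rw [Finset.sum_congr rfl fun y _ => h y, ← Finset.mul_sum,
        sum_mul_one_add_eq pY (fun y => ψY y x) hpY1 ε, hψY x, mul_zero, add_zero, mul_one]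
    have mX : ∀ (y : Y) (z : Z), ∑ x', vncJoint pX pY pZ ψY ψZ ε x' y z
        = pY y * (pZ z * (1 + s ε y z)) := by
      intro y z
      have h : ∀ x : X, vncJoint pX pY pZ ψY ψZ ε x y z
          = (pY y * pZ z) * (pX x * ((1 + ε * ψY y x) * (1 + ε * ψZ z x))) := by
        intro x; simp only [vncJoint]; ring
      rw [Finset.sum_congr rfl fun x _ => h x, ← Finset.mul_sum,
        sum_mul_prod_eq pX (fun x => ψY y x) (fun x => ψZ z x) hpX1 ε]
      simp only [hs, hA, hB, hC]
      ring
    have mXZ : ∀ y : Y, ∑ x', ∑ z, vncJoint pX pY pZ ψY ψZ ε x' y z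
        = pY y * (1 + ε * A y) := by
      intro y
      have h : ∀ x : X, ∑ z, vncJoint pX pY pZ ψY ψZ ε x y z
          = pY y * (pX x * (1 + ε * ψY y x)) := fun x => by rw [mZ x y]; ring
      rw [Finset.sum_congr rfl fun x _ => h x, ← Finset.mul_sum,
        sum_mul_one_add_eq pX (fun x => ψY y x) hpX1 ε]
    have mXY : ∀ z : Z, ∑ x', ∑ y, vncJoint pX pY pZ ψY ψZ ε x' y z
        = pZ z * (1 + ε * B z) := by
      intro z
      have h : ∀ x : X, ∑ y, vncJoint pX pY pZ ψY ψZ ε x y z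
          = pZ z * (pX x * (1 + ε * ψZ z x)) := fun x => by rw [mY x z]; ring
      rw [Finset.sum_congr rfl fun x _ => h x, ← Finset.mul_sum,
        sum_mul_one_add_eq pX (fun x => ψZ z x) hpX1 ε]
    have eIXY : vncIXY pX pY pZ ψY ψZ ε
        = (∑ x, ∑ y, pX x * (pY y * (1 + ε * ψY y x)) * Real.log (1 + ε * ψY y x)) - SY ε := by
      have step : vncIXY pX pY pZ ψY ψZ ε = ∑ x, ∑ y, pX x * (pY y * (1 + ε * ψY y x)) *
          (Real.log (1 + ε * ψY y x) - Real.log (1 + ε * A y)) := by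
        simp only [vncIXY]
        refine Finset.sum_congr rfl fun x _ => Finset.sum_congr rfl fun y _ => ?_
        rw [mZ x y, mXZ y]
        congr 1
        have hd : pX x * (pY y * (1 + ε * ψY y x)) / (pX x * (pY y * (1 + ε * A y)))
            = (1 + ε * ψY y x) / (1 + ε * A y) := by
          rw [div_eq_div_iff
            (mul_ne_zero (hpX x).ne' (mul_ne_zero (hpY y).ne' (p3 y).ne')) (p3 y).ne']
          ring
        rw [hd, Real.log_div (p1 y x).ne' (p3 y).ne']
      rw [step]
      have split : ∀ (x : X) (y : Y), pX x * (pY y * (1 + ε * ψY y x)) *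
          (Real.log (1 + ε * ψY y x) - Real.log (1 + ε * A y))
          = pX x * (pY y * (1 + ε * ψY y x)) * Real.log (1 + ε * ψY y x)
            - (pX x * (1 + ε * ψY y x)) * (pY y * Real.log (1 + ε * A y)) := fun x y => by ring
      rw [Finset.sum_congr rfl fun x _ => Finset.sum_congr rfl fun y _ => split x y]
      simp only [Finset.sum_sub_distrib]
      congr 1
      rw [Finset.sum_comm, hSY]
      refine Finset.sum_congr rfl fun y _ => ?_
      rw [← Finset.sum_mul, sum_mul_one_add_eq pX (fun x => ψY y x) hpX1 ε]
      simp only [hA]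
      ring
    have eIXZ : vncIXZ pX pY pZ ψY ψZ ε
        = (∑ x, ∑ z, pX x * (pZ z * (1 + ε * ψZ z x)) * Real.log (1 + ε * ψZ z x)) - SZ ε := by
      have step : vncIXZ pX pY pZ ψY ψZ ε = ∑ x, ∑ z, pX x * (pZ z * (1 + ε * ψZ z x)) *
          (Real.log (1 + ε * ψZ z x) - Real.log (1 + ε * B z)) := by
        simp only [vncIXZ]
        refine Finset.sum_congr rfl fun x _ => Finset.sum_congr rfl fun z _ => ?_
        rw [mY x z, mXY z]
        congr 1
        have hd : pX x * (pZ z * (1 + ε * ψZ z x)) / (pX x * (pZ z * (1 + ε * B z)))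
            = (1 + ε * ψZ z x) / (1 + ε * B z) := by
          rw [div_eq_div_iff
            (mul_ne_zero (hpX x).ne' (mul_ne_zero (hpZ z).ne' (p4 z).ne')) (p4 z).ne']
          ring
        rw [hd, Real.log_div (p2 z x).ne' (p4 z).ne']
      rw [step]
      have split : ∀ (x : X) (z : Z), pX x * (pZ z * (1 + ε * ψZ z x)) *
          (Real.log (1 + ε * ψZ z x) - Real.log (1 + ε * B z))
          = pX x * (pZ z * (1 + ε * ψZ z x)) * Real.log (1 + ε * ψZ z x)
            - (pX x * (1 + ε * ψZ z x)) * (pZ z * Real.log (1 + ε * B z)) := fun x z => by ring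
      rw [Finset.sum_congr rfl fun x _ => Finset.sum_congr rfl fun z _ => split x z]
      simp only [Finset.sum_sub_distrib]
      congr 1
      rw [Finset.sum_comm, hSZ]
      refine Finset.sum_congr rfl fun z _ => ?_
      rw [← Finset.sum_mul, sum_mul_one_add_eq pX (fun x => ψZ z x) hpX1 ε]
      simp only [hB]
      ring
    have eIXYZ : vncIXYZ pX pY pZ ψY ψZ ε
        = (∑ x, ∑ y, pX x * (pY y * (1 + ε * ψY y x)) * Real.log (1 + ε * ψY y x))
          + (∑ x, ∑ z, pX x * (pZ z * (1 + ε * ψZ z x)) * Real.log (1 + ε * ψZ z x))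
          - SYZ ε := by
      have step : vncIXYZ pX pY pZ ψY ψZ ε = ∑ x, ∑ y, ∑ z, vncJoint pX pY pZ ψY ψZ ε x y z *
          (Real.log (1 + ε * ψY y x) + Real.log (1 + ε * ψZ z x) - Real.log (1 + s ε y z)) := by
        simp only [vncIXYZ]
        refine Finset.sum_congr rfl fun x _ => Finset.sum_congr rfl fun y _ =>
          Finset.sum_congr rfl fun z _ => ?_
        rw [mX y z]
        congr 1
        have hd : vncJoint pX pY pZ ψY ψZ ε x y z / (pX x * (pY y * (pZ z * (1 + s ε y z))))
            = (1 + ε * ψY y x) * (1 + ε * ψZ z x) / (1 + s ε y z) := by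
          rw [div_eq_div_iff
            (mul_ne_zero (hpX x).ne' (mul_ne_zero (hpY y).ne'
              (mul_ne_zero (hpZ z).ne' (p5 y z).ne'))) (p5 y z).ne']
          simp only [vncJoint]
          ring
        rw [hd, Real.log_div (mul_ne_zero (p1 y x).ne' (p2 z x).ne') (p5 y z).ne',
          Real.log_mul (p1 y x).ne' (p2 z x).ne']
      have TS1 : ∑ x, ∑ y, ∑ z, vncJoint pX pY pZ ψY ψZ ε x y z * Real.log (1 + ε * ψY y x)
          = ∑ x, ∑ y, pX x * (pY y * (1 + ε * ψY y x)) * Real.log (1 + ε * ψY y x) := by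
        refine Finset.sum_congr rfl fun x _ => Finset.sum_congr rfl fun y _ => ?_
        have h : ∀ z : Z, vncJoint pX pY pZ ψY ψZ ε x y z * Real.log (1 + ε * ψY y x)
            = (pX x * (pY y * (1 + ε * ψY y x)) * Real.log (1 + ε * ψY y x))
              * (pZ z * (1 + ε * ψZ z x)) := by
          intro z; simp only [vncJoint]; ring
        rw [Finset.sum_congr rfl fun z _ => h z, ← Finset.mul_sum,
          sum_mul_one_add_eq pZ (fun z => ψZ z x) hpZ1 ε, hψZ x, mul_zero, add_zero, mul_one]
      have TS2 : ∑ x, ∑ y, ∑ z, vncJoint pX pY pZ ψY ψZ ε x y z * Real.log (1 + ε * ψZ z x)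
          = ∑ x, ∑ z, pX x * (pZ z * (1 + ε * ψZ z x)) * Real.log (1 + ε * ψZ z x) := by
        refine Finset.sum_congr rfl fun x _ => ?_
        rw [Finset.sum_comm]
        refine Finset.sum_congr rfl fun z _ => ?_
        have h : ∀ y : Y, vncJoint pX pY pZ ψY ψZ ε x y z * Real.log (1 + ε * ψZ z x)
            = (pX x * (pZ z * (1 + ε * ψZ z x)) * Real.log (1 + ε * ψZ z x))
              * (pY y * (1 + ε * ψY y x)) := by
          intro y; simp only [vncJoint]; ring
        rw [Finset.sum_congr rfl fun y _ => h y, ← Finset.mul_sum,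
          sum_mul_one_add_eq pY (fun y => ψY y x) hpY1 ε, hψY x, mul_zero, add_zero, mul_one]
      have TS3 : ∑ x, ∑ y, ∑ z, vncJoint pX pY pZ ψY ψZ ε x y z * Real.log (1 + s ε y z)
          = SYZ ε := by
        rw [Finset.sum_comm, hSYZ]
        refine Finset.sum_congr rfl fun y _ => ?_
        rw [Finset.sum_comm]
        refine Finset.sum_congr rfl fun z _ => ?_
        rw [← Finset.sum_mul, mX y z]
        ring
      rw [step]
      have split : ∀ (x : X) (y : Y) (z : Z), vncJoint pX pY pZ ψY ψZ ε x y z *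
          (Real.log (1 + ε * ψY y x) + Real.log (1 + ε * ψZ z x) - Real.log (1 + s ε y z))
          = vncJoint pX pY pZ ψY ψZ ε x y z * Real.log (1 + ε * ψY y x)
            + vncJoint pX pY pZ ψY ψZ ε x y z * Real.log (1 + ε * ψZ z x)
            - vncJoint pX pY pZ ψY ψZ ε x y z * Real.log (1 + s ε y z) := fun x y z => by ring
      rw [Finset.sum_congr rfl fun x _ => Finset.sum_congr rfl fun y _ =>
        Finset.sum_congr rfl fun z _ => split x y z]
      simp only [Finset.sum_add_distrib, Finset.sum_sub_distrib]
      rw [TS1, TS2, TS3]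
    rw [eIXYZ, eIXY, eIXZ]
    ring
  -- eventual positivity
  have hev : ∀ᶠ ε : ℝ in nhdsWithin 0 {(0:ℝ)}ᶜ, (∀ y x, 0 < 1 + ε * ψY y x) ∧
      (∀ z x, 0 < 1 + ε * ψZ z x) ∧ (∀ y, 0 < 1 + ε * A y) ∧ (∀ z, 0 < 1 + ε * B z) ∧
      (∀ y z, 0 < 1 + s ε y z) := by
    have hid : Filter.Tendsto (fun ε : ℝ => ε) (nhds (0:ℝ)) (nhds 0) := tendsto_id
    have hpos : ∀ k : ℝ, ∀ᶠ ε : ℝ in nhds 0, 0 < 1 + ε * k := by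
      intro k
      have h : Filter.Tendsto (fun ε : ℝ => 1 + ε * k) (nhds 0) (nhds 1) := by
        simpa using tendsto_const_nhds.add (hid.mul_const k)
      exact h.eventually (eventually_gt_nhds zero_lt_one)
    have hpos2 : ∀ (y : Y) (z : Z), ∀ᶠ ε : ℝ in nhds 0, 0 < 1 + s ε y z := by
      intro y z
      have h : Filter.Tendsto (fun ε : ℝ => 1 + s ε y z) (nhds 0) (nhds 1) := by
        simp only [hs]
        simpa using tendsto_const_nhds.add
          (((hid.mul_const (A y)).add (hid.mul_const (B z))).add ((hid.pow 2).mul_const (C y z)))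
      exact h.eventually (eventually_gt_nhds zero_lt_one)
    have e1 : ∀ᶠ ε : ℝ in nhds 0, ∀ (y : Y) (x : X), 0 < 1 + ε * ψY y x :=
      Filter.eventually_all.2 fun y => Filter.eventually_all.2 fun x => hpos (ψY y x)
    have e2 : ∀ᶠ ε : ℝ in nhds 0, ∀ (z : Z) (x : X), 0 < 1 + ε * ψZ z x :=
      Filter.eventually_all.2 fun z => Filter.eventually_all.2 fun x => hpos (ψZ z x)
    have e3 : ∀ᶠ ε : ℝ in nhds 0, ∀ y : Y, 0 < 1 + ε * A y :=
      Filter.eventually_all.2 fun y => hpos (A y)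
    have e4 : ∀ᶠ ε : ℝ in nhds 0, ∀ z : Z, 0 < 1 + ε * B z :=
      Filter.eventually_all.2 fun z => hpos (B z)
    have e5 : ∀ᶠ ε : ℝ in nhds 0, ∀ (y : Y) (z : Z), 0 < 1 + s ε y z :=
      Filter.eventually_all.2 fun y => Filter.eventually_all.2 fun z => hpos2 y z
    exact (e1.and (e2.and (e3.and (e4.and e5)))).filter_mono nhdsWithin_le_nhds
  refine (hGlim.mono_left nhdsWithin_le_nhds).congr' ?_
  filter_upwards [hev, self_mem_nhdsWithin] with ε hp hne
  obtain ⟨p1, p2, p3, p4, p5⟩ := hp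
  have hne0 : ε ≠ 0 := by simpa using hne
  rw [ident ε p1 p2 p3 p4 p5, claim2 ε, mul_comm, mul_div_assoc,
    div_self (pow_ne_zero 2 hne0), mul_one]
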